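/- Let h = f + w be the objective of a Bounded Generalised Min-Cut instance on vertex set V, where f is superadditive and w is a non-negative cut function, with all solutions (sets X ⊆ V with q ≤ |X| ≤ |V| - p) having value at least λ > 0. If X ⊆ V is a solution with h(X) ≤ αλ and X can be partitioned into α + 1 pairwise disjoint subsets Z₁, ..., Z_{α+1} each of which is itself a solution, and w is identically zero, then we obtain a contradiction; consequently, when w ≡ 0 every α-optimal solution X satisfies |X| < (α + 1)·q' for any q' such that every subset of size at least q' is a solution. Precisely: if f is superadditive, every set of size ≥ l* is a solution of value ≥ λ > 0, and f(X) ≤ αλ where α is a positive integer, then |X| < (α + 1)·l*. -/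

import Mathlib

/-- If `f` is superadditive, every set of size at least `l*` has value at least
`λ > 0`, and `f X ≤ α·λ` for a positive integer `α`, then `|X| < (α + 1)·l*`. -/
theorem card_bound_of_superadditive {V : Type*} [Fintype V] [DecidableEq V]
    (f : Finset V → WithTop ℚ)
    (hempty : f ∅ = 0) (hnonneg : ∀ X : Finset V, 0 ≤ f X)
    (hsup : ∀ X Y : Finset V, Disjoint X Y → f X + f Y ≤ f (X ∪ Y))
    (lam : ℚ) (hlam : 0 < lam) (lstar : ℕ) (α : ℕ) (hα : 0 < α)
    (hsol : ∀ Z : Finset V, lstar ≤ Z.card → ((lam : ℚ) : WithTop ℚ) ≤ f Z)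
    (X : Finset V) (hX : f X ≤ ((α : ℚ) : WithTop ℚ) * ((lam : ℚ) : WithTop ℚ)) :
    X.card < (α + 1) * lstar := by
  have key : ∀ (n : ℕ) (Y : Finset V), n * lstar ≤ Y.card →
      (((n : ℚ) * lam : ℚ) : WithTop ℚ) ≤ f Y := by
    intro n
    induction n with
    | zero => intro Y _; simpa using hnonneg Y
    | succ n ih =>
      intro Y hcard
      have hl : lstar ≤ Y.card := le_trans (by nlinarith) hcard
      obtain ⟨Z, hZY, hZcard⟩ := Finset.exists_subset_card_eq hl
      have hdisj : Disjoint Z (Y \ Z) := Finset.disjoint_sdiff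
      have hunion : Z ∪ (Y \ Z) = Y := Finset.union_sdiff_of_subset hZY
      have hcard' : n * lstar ≤ (Y \ Z).card := by
        rw [Finset.card_sdiff_of_subset hZY, hZcard]
        have : (n + 1) * lstar = n * lstar + lstar := by ring
        omega
      have h1 := hsol Z (by omega)
      have h2 := ih (Y \ Z) hcard'
      have h3 := hsup Z (Y \ Z) hdisj
      rw [hunion] at h3
      calc (((↑(n+1) * lam : ℚ)) : WithTop ℚ)
          = ((lam : ℚ) : WithTop ℚ) + (((n : ℚ) * lam : ℚ) : WithTop ℚ) := by
            rw [← WithTop.coe_add]; exact_mod_cast (by push_cast; ring : ((n:ℚ)+1)*lam = lam + (n:ℚ)*lam)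
        _ ≤ f Z + f (Y \ Z) := add_le_add h1 h2
        _ ≤ f Y := h3
  by_contra h
  push_neg at h
  have h1 := key (α + 1) X (by exact_mod_cast h)
  have h2 : (((α + 1 : ℚ) * lam : ℚ) : WithTop ℚ) ≤ (((α : ℚ) * lam : ℚ) : WithTop ℚ) := by
    rw [WithTop.coe_mul] at *
    calc _ ≤ f X := by exact_mod_cast h1
      _ ≤ _ := hX
  rw [WithTop.coe_le_coe] at h2
  nlinarith
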